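/- Let A be Drazin invertible with Drazin inverse A_d, and X a bounded operator with Δ_{A_d*, A}^m(X) = 0, AX = XA, and such that the restriction X₁₁ of X to H₁ = A^p(H) has dense range in H₁. Then A is (m+2p-2)-selfadjoint, where p is the Drazin index of A. -/

import Mathlib

open Finset in
lemma aux_delta_Delta {R : Type*} [Ring R] (a b c : R) (hcb : c * b = 1) (k : ℕ) (z : R) :
    (fun w => c * w - w * a)^[k] z = (-c) ^ k * ((fun w => b * w * a - w)^[k] z) := by
  induction k with
  | zero => simp
  | succ k ih =>
    rw [Function.iterate_succ_apply', Function.iterate_succ_apply', ih]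
    set W := (fun w => b * w * a - w)^[k] z with hW
    have hcomm : c * (-c) ^ k = (-c) ^ k * c := ((Commute.refl c).neg_right.pow_right k).eq
    simp only [pow_succ]
    calc c * ((-c) ^ k * W) - (-c) ^ k * W * a
        = (-c) ^ k * (c * W - W * a) := by rw [← mul_assoc, hcomm, mul_assoc, mul_sub, mul_assoc]
      _ = (-c) ^ k * -c * (b * W * a - W) := by
          rw [mul_assoc]
          congr 1
          rw [neg_mul, mul_sub, ← mul_assoc, ← mul_assoc, hcb, one_mul, neg_sub]

lemma aux_delta_mul {R : Type*} [Ring R] (a c x : R) (hax : a * x = x * a) (k : ℕ) (w : R) :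
    (fun w => c * w - w * a)^[k] (w * x) = ((fun w => c * w - w * a)^[k] w) * x := by
  induction k with
  | zero => rfl
  | succ k ih =>
    rw [Function.iterate_succ_apply', Function.iterate_succ_apply', ih]
    simp only [sub_mul, mul_assoc, ← hax]

open LinearMap in
lemma aux_nilpotent {R : Type*} [Ring R] [Algebra ℂ R] (c d : R) (p n : ℕ)
    (hc : c ^ p = 0) (hd : d ^ p = 0) (hn : 2 * p - 1 ≤ n) (hp : 1 ≤ p) :
    (fun w => c * w - w * d)^[n] (1 : R) = 0 := by
  have hfun : (fun w => c * w - w * d) = ⇑(mulLeft ℂ c - mulRight ℂ d) := by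
    funext w; simp
  have key : (mulLeft ℂ c - mulRight ℂ d) ^ n = 0 := by
    have hcom : Commute (mulLeft ℂ c) (-(mulRight ℂ d)) :=
      (LinearMap.commute_mulLeft_right (R := ℂ) c d).neg_right
    rw [sub_eq_add_neg, hcom.add_pow]
    apply Finset.sum_eq_zero
    intro i hi
    rcases le_or_gt p i with h | h
    · have hci : c ^ i = 0 := by
        have : c ^ i = c ^ p * c ^ (i - p) := by rw [← pow_add, Nat.add_sub_cancel' h]
        rw [this, hc, zero_mul]
      have : mulLeft ℂ c ^ i = 0 := by rw [pow_mulLeft, hci, mulLeft_zero_eq_zero]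
      simp [this]
    · have hle : i ≤ n := by simp only [Finset.mem_range] at hi; omega
      have hdi : d ^ (n - i) = 0 := by
        have hpi : p ≤ n - i := by omega
        have : d ^ (n - i) = d ^ p * d ^ (n - i - p) := by rw [← pow_add, Nat.add_sub_cancel' hpi]
        rw [this, hd, zero_mul]
      have h1 : mulRight ℂ d ^ (n - i) = 0 := by rw [pow_mulRight, hdi, mulRight_zero_eq_zero]
      have : (-(mulRight ℂ d)) ^ (n - i) = 0 := 
        (neg_pow (mulRight ℂ d : Module.End ℂ R) (n - i)).trans (by rw [h1, mul_zero])
      simp [this]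
  rw [hfun, ← Module.End.pow_apply, key, LinearMap.zero_apply]

set_option maxHeartbeats 800000 in
open ContinuousLinearMap in
/-- If `A = A₁ ⊕ A₂` (on the Hilbert direct sum `H₁ ⊕₂ H₂`) is Drazin invertible with
`A₁` invertible, `A₂` `p`-nilpotent, Drazin inverse `A_d = A₁⁻¹ ⊕ 0`, and if
`Δ_{A_d*,A}^m(X) = 0`, `AX = XA`, and the `(1,1)` entry `X₁₁` of `X` has dense range,
then `A` is `(m+2p-2)`-selfadjoint. -/
theorem stmt_16 {H₁ H₂ : Type*}
    [NormedAddCommGroup H₁] [InnerProductSpace ℂ H₁] [CompleteSpace H₁]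
    [NormedAddCommGroup H₂] [InnerProductSpace ℂ H₂] [CompleteSpace H₂]
    (A₁ A₁' : H₁ →L[ℂ] H₁) (A₂ : H₂ →L[ℂ] H₂) (p m : ℕ) (hp : 1 ≤ p) (hm : 1 ≤ m)
    (hA₁ : A₁ * A₁' = 1) (hA₁' : A₁' * A₁ = 1) (hA₂ : A₂ ^ p = 0)
    (e : WithLp 2 (H₁ × H₂) ≃L[ℂ] H₁ × H₂)
    (he : e = WithLp.prodContinuousLinearEquiv 2 ℂ H₁ H₂)
    (A Ad : WithLp 2 (H₁ × H₂) →L[ℂ] WithLp 2 (H₁ × H₂))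
    (hA : A = (e.symm : H₁ × H₂ →L[ℂ] WithLp 2 (H₁ × H₂)) ∘L (A₁.prodMap A₂) ∘L
      (e : WithLp 2 (H₁ × H₂) →L[ℂ] H₁ × H₂))
    (hAd : Ad = (e.symm : H₁ × H₂ →L[ℂ] WithLp 2 (H₁ × H₂)) ∘L
      (A₁'.prodMap (0 : H₂ →L[ℂ] H₂)) ∘L (e : WithLp 2 (H₁ × H₂) →L[ℂ] H₁ × H₂))
    (X : WithLp 2 (H₁ × H₂) →L[ℂ] WithLp 2 (H₁ × H₂))
    (hΔ : (fun Y : WithLp 2 (H₁ × H₂) →L[ℂ] WithLp 2 (H₁ × H₂) =>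
        adjoint Ad * Y * A - Y)^[m] X = 0)
    (hAX : A * X = X * A)
    (hdense : DenseRange ((fst ℂ H₁ H₂) ∘L (e : WithLp 2 (H₁ × H₂) →L[ℂ] H₁ × H₂) ∘L X ∘L
      (e.symm : H₁ × H₂ →L[ℂ] WithLp 2 (H₁ × H₂)) ∘L (inl ℂ H₁ H₂))) :
    (fun Y : WithLp 2 (H₁ × H₂) →L[ℂ] WithLp 2 (H₁ × H₂) =>
        adjoint A * Y - Y * A)^[m + 2 * p - 2] 1 = 0 := by
  subst he
  set e := WithLp.prodContinuousLinearEquiv 2 ℂ H₁ H₂ with he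
  set bd : (H₁ →L[ℂ] H₁) → (H₂ →L[ℂ] H₂) → (WithLp 2 (H₁ × H₂) →L[ℂ] WithLp 2 (H₁ × H₂)) :=
    fun M N => (e.symm : H₁ × H₂ →L[ℂ] WithLp 2 (H₁ × H₂)) ∘L (M.prodMap N) ∘L
      (e : WithLp 2 (H₁ × H₂) →L[ℂ] H₁ × H₂) with hbd
  have hA' : A = bd A₁ A₂ := hA
  have hAd' : Ad = bd A₁' 0 := hAd
  have bd_adjoint : ∀ (M : H₁ →L[ℂ] H₁) (N : H₂ →L[ℂ] H₂),
      adjoint (bd M N) = bd (adjoint M) (adjoint N) := by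
    intro M N
    symm
    rw [eq_adjoint_iff]
    intro x y
    show (inner ℂ ((adjoint M) x.ofLp.1) y.ofLp.1 + inner ℂ ((adjoint N) x.ofLp.2) y.ofLp.2 : ℂ)
      = inner ℂ x.ofLp.1 (M y.ofLp.1) + inner ℂ x.ofLp.2 (N y.ofLp.2)
    rw [adjoint_inner_left, adjoint_inner_left]
  have bd_mul : ∀ (M M' : H₁ →L[ℂ] H₁) (N N' : H₂ →L[ℂ] H₂),
      bd M N * bd M' N' = bd (M * M') (N * N') := by
    intro M M' N N'; ext x <;> rfl
  have bd_sub : ∀ (M M' : H₁ →L[ℂ] H₁) (N N' : H₂ →L[ℂ] H₂),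
      bd M N - bd M' N' = bd (M - M') (N - N') := by
    intro M M' N N'; ext x <;> rfl
  have bd_one : bd 1 1 = (1 : WithLp 2 (H₁ × H₂) →L[ℂ] WithLp 2 (H₁ × H₂)) := by
    ext x <;> rfl
  have bd_zero : bd 0 0 = (0 : WithLp 2 (H₁ × H₂) →L[ℂ] WithLp 2 (H₁ × H₂)) := by
    ext x <;> rfl
  have hAst : adjoint A = bd (adjoint A₁) (adjoint A₂) := by rw [hA', bd_adjoint]
  have hAdst : adjoint Ad = bd (adjoint A₁') (adjoint (0 : H₂ →L[ℂ] H₂)) := by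
    rw [hAd', bd_adjoint]
  set P : WithLp 2 (H₁ × H₂) →L[ℂ] H₁ :=
    (fst ℂ H₁ H₂) ∘L (e : WithLp 2 (H₁ × H₂) →L[ℂ] H₁ × H₂) with hP
  set J : H₁ →L[ℂ] WithLp 2 (H₁ × H₂) :=
    (e.symm : H₁ × H₂ →L[ℂ] WithLp 2 (H₁ × H₂)) ∘L (inl ℂ H₁ H₂) with hJ
  have hPbd : ∀ (M : H₁ →L[ℂ] H₁) (N : H₂ →L[ℂ] H₂) (x : WithLp 2 (H₁ × H₂)),
      P (bd M N x) = M (P x) := by intro M N x; rfl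
  have hbdJ : ∀ (M : H₁ →L[ℂ] H₁) (N : H₂ →L[ℂ] H₂) (x : H₁),
      bd M N (J x) = J (M x) := by
    intro M N x
    show e.symm (M x, N 0) = e.symm (M x, 0)
    rw [map_zero]
  set X11 : H₁ →L[ℂ] H₁ := P ∘L X ∘L J with hX11
  have hd : DenseRange ⇑X11 := by
    have : ⇑X11 = ⇑((fst ℂ H₁ H₂) ∘L (e : WithLp 2 (H₁ × H₂) →L[ℂ] H₁ × H₂) ∘L X ∘L
        (e.symm : H₁ × H₂ →L[ℂ] WithLp 2 (H₁ × H₂)) ∘L (inl ℂ H₁ H₂)) := by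
      funext x; rfl
    rw [this]
    exact hdense
  clear_value X11
  clear_value P
  clear_value J
  clear_value bd
  clear_value e
  have key : ∀ k, P ∘L ((fun Y : WithLp 2 (H₁ × H₂) →L[ℂ] WithLp 2 (H₁ × H₂) =>
      adjoint Ad * Y * A - Y)^[k] X) ∘L J
      = (fun Z : H₁ →L[ℂ] H₁ => (adjoint A₁') * Z * A₁ - Z)^[k] X11 := by
    intro k
    induction k with
    | zero => simp [hX11]
    | succ k ih =>
      rw [Function.iterate_succ_apply', Function.iterate_succ_apply', ← ih]
      ext x
      set Y := (fun Y : WithLp 2 (H₁ × H₂) →L[ℂ] WithLp 2 (H₁ × H₂) =>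
        adjoint Ad * Y * A - Y)^[k] X with hY
      show P ((adjoint Ad * Y * A - Y) (J x)) =
        (adjoint A₁' * (P ∘L Y ∘L J) * A₁ - P ∘L Y ∘L J) x
      have h1 : A (J x) = J (A₁ x) := by rw [hA']; exact hbdJ A₁ A₂ x
      have h2 : ∀ z, P (adjoint Ad z) = adjoint A₁' (P z) := by
        intro z; rw [hAdst]; exact hPbd _ _ z
      simp only [ContinuousLinearMap.sub_apply, ContinuousLinearMap.mul_apply, map_sub,
        ContinuousLinearMap.comp_apply, h1, h2]
  have hcomm : A₁ * X11 = X11 * A₁ := by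
    ext x
    have h1 : A (J x) = J (A₁ x) := by rw [hA']; exact hbdJ A₁ A₂ x
    have h2 : ∀ z, P (A z) = A₁ (P z) := by intro z; rw [hA']; exact hPbd A₁ A₂ z
    have h3 := congrArg (fun T : WithLp 2 (H₁ × H₂) →L[ℂ] WithLp 2 (H₁ × H₂) => T (J x)) hAX
    simp only [ContinuousLinearMap.mul_apply] at h3
    show A₁ (X11 x) = X11 (A₁ x)
    simp only [hX11, ContinuousLinearMap.comp_apply, ← h2, h3, h1]
  have hΔ1 : (fun Z : H₁ →L[ℂ] H₁ => (adjoint A₁') * Z * A₁ - Z)^[m] X11 = 0 := by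
    rw [← key m, hΔ]
    ext x; simp
  have hcb : adjoint A₁ * adjoint A₁' = 1 := by
    have := congrArg star hA₁'
    simpa [star_eq_adjoint, star_mul] using this
  have hδX : (fun w : H₁ →L[ℂ] H₁ => adjoint A₁ * w - w * A₁)^[m] X11 = 0 := by
    rw [aux_delta_Delta A₁ (adjoint A₁') (adjoint A₁) hcb m X11, hΔ1, mul_zero]
  have hδ1X : ((fun w : H₁ →L[ℂ] H₁ => adjoint A₁ * w - w * A₁)^[m] 1) * X11 = 0 := by
    rw [← aux_delta_mul A₁ (adjoint A₁) X11 hcomm m 1, one_mul, hδX]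
  have hδ1 : (fun w : H₁ →L[ℂ] H₁ => adjoint A₁ * w - w * A₁)^[m] 1 = 0 := by
    set T := (fun w : H₁ →L[ℂ] H₁ => adjoint A₁ * w - w * A₁)^[m] 1 with hT
    have heq : ⇑T ∘ ⇑X11 = ⇑(0 : H₁ →L[ℂ] H₁) ∘ ⇑X11 := by
      funext x
      have := congrArg (fun S : H₁ →L[ℂ] H₁ => S x) hδ1X
      simpa using this
    have := hd.equalizer T.continuous (0 : H₁ →L[ℂ] H₁).continuous heq
    ext x
    exact congrFun this x
  have hδ1n : (fun w : H₁ →L[ℂ] H₁ => adjoint A₁ * w - w * A₁)^[m + 2 * p - 2] 1 = 0 := by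
    have harith : m + 2 * p - 2 = (2 * p - 2) + m := by omega
    rw [harith, Function.iterate_add_apply, hδ1]
    exact Function.iterate_fixed (by simp) _
  have hA₂st : (adjoint A₂) ^ p = 0 := by
    have := congrArg star hA₂
    simpa [star_eq_adjoint, star_pow] using this
  have hδ2n : (fun w : H₂ →L[ℂ] H₂ => adjoint A₂ * w - w * A₂)^[m + 2 * p - 2] 1 = 0 :=
    aux_nilpotent (adjoint A₂) A₂ p (m + 2 * p - 2) hA₂st hA₂ (by omega) hp
  have main : ∀ k, (fun Y : WithLp 2 (H₁ × H₂) →L[ℂ] WithLp 2 (H₁ × H₂) =>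
      adjoint A * Y - Y * A)^[k] 1
      = bd ((fun w : H₁ →L[ℂ] H₁ => adjoint A₁ * w - w * A₁)^[k] 1)
           ((fun w : H₂ →L[ℂ] H₂ => adjoint A₂ * w - w * A₂)^[k] 1) := by
    intro k
    induction k with
    | zero => exact bd_one.symm
    | succ k ih =>
      rw [Function.iterate_succ_apply', Function.iterate_succ_apply',
        Function.iterate_succ_apply', ih, hAst, hA', bd_mul, bd_mul, bd_sub]
  rw [main, hδ1n, hδ2n, bd_zero]
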